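/- The function σ(p) = h(p)·c / (p²(1-p)·Λ·(r+ρ_L+ρ_H)), where h(p) = ρ_L(1-p) - ρ_H p, is strictly decreasing on (0,π₀], with σ(p) → +∞ as p → 0⁺ and σ(π₀) = 0. -/

import Mathlib

open Set Filter

lemma stmt_3_key (ρL ρH a b : ℝ) (hρH : 0 < ρH)
    (ha : 0 < a) (hab : a < b) (hb : b * (ρL + ρH) ≤ ρL) (ha1 : a < 1) :
    (ρL * (1 - b) - ρH * b) * (a ^ 2 * (1 - a)) < (ρL * (1 - a) - ρH * a) * (b ^ 2 * (1 - b)) := by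
  have hb0 : 0 < b := ha.trans hab
  have hG : 0 < ρH * b ^ 2 + (ρL - (ρL + ρH) * b) * ((a + b) * (1 - a)) := by
    have h1 : 0 < ρH * b ^ 2 := by positivity
    have h2 : 0 ≤ (ρL - (ρL + ρH) * b) * ((a + b) * (1 - a)) := by
      apply mul_nonneg (by linarith) (by nlinarith)
    linarith
  nlinarith [mul_pos (sub_pos.mpr hab) hG]

/-- `σ(p) = (ρ_L(1-p) - ρ_H p)·c / (p²(1-p)·Λ·(r+ρ_L+ρ_H))` is strictly
decreasing on `(0,π₀]`, with `σ(p) → +∞` as `p → 0⁺` and `σ(π₀) = 0`. -/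
theorem stmt_3 (ρL ρH Λ c r : ℝ) (hρL : 0 < ρL) (hρH : 0 < ρH)
    (hΛ : 0 < Λ) (hc : 0 < c) (hr : 0 < r) :
    StrictAntiOn
      (fun p : ℝ => (ρL * (1 - p) - ρH * p) * c / (p ^ 2 * (1 - p) * Λ * (r + ρL + ρH)))
      (Ioc 0 (ρL / (ρL + ρH))) ∧
    Tendsto
      (fun p : ℝ => (ρL * (1 - p) - ρH * p) * c / (p ^ 2 * (1 - p) * Λ * (r + ρL + ρH)))
      (nhdsWithin 0 (Ioi 0)) atTop ∧
    (ρL * (1 - (ρL / (ρL + ρH))) - ρH * (ρL / (ρL + ρH))) * c /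
      ((ρL / (ρL + ρH)) ^ 2 * (1 - ρL / (ρL + ρH)) * Λ * (r + ρL + ρH)) = 0 := by
  have hs : 0 < ρL + ρH := by linarith
  have hR : 0 < r + ρL + ρH := by linarith
  have hπ1 : ρL / (ρL + ρH) < 1 := by
    rw [div_lt_one hs]; linarith
  refine ⟨?_, ?_, ?_⟩
  · -- strict antitonicity
    intro a ha b hb hab
    obtain ⟨ha0, haπ⟩ := ha
    obtain ⟨hb0, hbπ⟩ := hb
    have ha1 : a < 1 := haπ.trans_lt hπ1
    have hb1 : b < 1 := hbπ.trans_lt hπ1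
    have hbs : b * (ρL + ρH) ≤ ρL := by
      rw [← le_div_iff₀ hs]; exact hbπ
    have key := stmt_3_key ρL ρH a b hρH ha0 hab hbs (haπ.trans_lt hπ1)
    have hDa : 0 < a ^ 2 * (1 - a) := mul_pos (by positivity) (by linarith)
    have hDb : 0 < b ^ 2 * (1 - b) := mul_pos (by positivity) (by linarith)
    simp only
    rw [div_lt_div_iff₀ (by positivity) (by positivity)]
    have h2 : ((ρL * (1 - b) - ρH * b) * (a ^ 2 * (1 - a))) * (c * (Λ * (r + ρL + ρH)))
        < ((ρL * (1 - a) - ρH * a) * (b ^ 2 * (1 - b))) * (c * (Λ * (r + ρL + ρH))) := by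
      exact mul_lt_mul_of_pos_right key (by positivity)
    nlinarith [h2]
  · -- tendsto atTop
    have hnum : Tendsto (fun p : ℝ => (ρL * (1 - p) - ρH * p) * c)
        (nhdsWithin 0 (Ioi 0)) (nhds (ρL * c)) := by
      have : Tendsto (fun p : ℝ => (ρL * (1 - p) - ρH * p) * c) (nhds 0)
          (nhds ((ρL * (1 - 0) - ρH * 0) * c)) := by
        apply Continuous.tendsto; continuity
      simpa using this.mono_left nhdsWithin_le_nhds
    have hden : Tendsto (fun p : ℝ => p ^ 2 * (1 - p) * Λ * (r + ρL + ρH))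
        (nhdsWithin 0 (Ioi 0)) (nhdsWithin 0 (Ioi 0)) := by
      apply tendsto_nhdsWithin_of_tendsto_nhds_of_eventually_within
      · have : Tendsto (fun p : ℝ => p ^ 2 * (1 - p) * Λ * (r + ρL + ρH)) (nhds 0)
            (nhds ((0:ℝ) ^ 2 * (1 - 0) * Λ * (r + ρL + ρH))) := by
          apply Continuous.tendsto; continuity
        simpa using this.mono_left nhdsWithin_le_nhds
      · filter_upwards [Ioo_mem_nhdsGT_of_mem (by norm_num : (0:ℝ) ∈ Ico (0:ℝ) 1)] with p hp
        have h1 : 0 < p := hp.1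
        have h2 : p < 1 := hp.2
        have h3 : 0 < 1 - p := by linarith
        exact mem_Ioi.mpr (by positivity)
    have hinv : Tendsto (fun p : ℝ => (p ^ 2 * (1 - p) * Λ * (r + ρL + ρH))⁻¹)
        (nhdsWithin 0 (Ioi 0)) atTop := tendsto_inv_nhdsGT_zero.comp hden
    have := hinv.atTop_mul_pos (by positivity : 0 < ρL * c) hnum
    refine this.congr (fun p => ?_)
    simp only [div_eq_inv_mul]
  · -- value at π₀ is 0
    have hnum : ρL * (1 - ρL / (ρL + ρH)) - ρH * (ρL / (ρL + ρH)) = 0 := by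
      field_simp
      ring
    rw [hnum, zero_mul, zero_div]
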